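/- The second-neighbor Lennard-Jones chain energy density has a unique ground-state lattice constant: the function g(r) := φ(r) + φ(2r) attains a global minimum over (0,∞) at a unique point a₀, and this minimizer satisfies 0.99 < a₀ < 1. -/

import Mathlib

/-- The Lennard-Jones potential `φ(r) = r⁻¹² − 2 r⁻⁶`. -/
noncomputable def LJ : ℝ → ℝ := fun r => r ^ (-12 : ℤ) - 2 * r ^ (-6 : ℤ)

lemma LJ_key (r : ℝ) (hr : 0 < r) :
    LJ r + LJ (2 * r) =
      (4097/4096) * (r ^ (-6:ℤ) - 4160/4097)^2 - (4097/4096) * (4160/4097)^2 := by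
  have hr' : r ≠ 0 := hr.ne'
  simp only [LJ, zpow_neg, show ((12:ℤ)) = ((12:ℕ):ℤ) from rfl,
    show ((6:ℤ)) = ((6:ℕ):ℤ) from rfl, zpow_natCast]
  have e1 : (((2*r)^(12:ℕ):ℝ))⁻¹ = 4096⁻¹ * ((r^(6:ℕ))⁻¹)^2 := by
    field_simp; ring
  have e2 : (((2*r)^(6:ℕ):ℝ))⁻¹ = 64⁻¹ * (r^(6:ℕ))⁻¹ := by
    field_simp; ring
  have e3 : ((r^(12:ℕ):ℝ))⁻¹ = ((r^(6:ℕ))⁻¹)^2 := by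
    field_simp
  rw [e1, e2, e3]
  ring

/-- The second-neighbor Lennard-Jones energy density `g(r) = φ(r) + φ(2r)` attains a
global minimum over `(0,∞)` at a unique point `a₀`, and `0.99 < a₀ < 1`. -/
theorem stmt_9 :
    ∃ a₀ : ℝ, 0 < a₀ ∧
      (∀ r : ℝ, 0 < r → LJ a₀ + LJ (2 * a₀) ≤ LJ r + LJ (2 * r)) ∧
      (∀ b : ℝ, 0 < b → (∀ r : ℝ, 0 < r → LJ b + LJ (2 * b) ≤ LJ r + LJ (2 * r)) → b = a₀) ∧
      0.99 < a₀ ∧ a₀ < 1 := by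
  set c : ℝ := 4097/4160 with hc
  have hc0 : (0:ℝ) < c := by norm_num
  set a₀ : ℝ := c ^ ((1:ℝ)/6) with ha
  have ha0 : 0 < a₀ := Real.rpow_pos_of_pos hc0 _
  have hpow : a₀ ^ (6:ℕ) = c := by
    rw [ha, ← Real.rpow_natCast (c ^ ((1:ℝ)/6)) 6, ← Real.rpow_mul hc0.le]
    norm_num
  have hza : a₀ ^ (-6:ℤ) = 4160/4097 := by
    rw [zpow_neg, show ((6:ℤ)) = (6:ℕ) by norm_num, zpow_natCast, hpow, hc]
    norm_num
  refine ⟨a₀, ha0, ?_, ?_, ?_, ?_⟩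
  · intro r hr
    rw [LJ_key r hr, LJ_key a₀ ha0, hza]
    nlinarith [sq_nonneg (r ^ (-6:ℤ) - 4160/4097)]
  · intro b hb hmin
    have h1 := hmin a₀ ha0
    have h2 : LJ a₀ + LJ (2 * a₀) ≤ LJ b + LJ (2 * b) := by
      rw [LJ_key b hb, LJ_key a₀ ha0, hza]
      nlinarith [sq_nonneg (b ^ (-6:ℤ) - 4160/4097)]
    have heq : LJ b + LJ (2 * b) = LJ a₀ + LJ (2 * a₀) := le_antisymm h1 h2
    rw [LJ_key b hb, LJ_key a₀ ha0, hza] at heq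
    have hbz : b ^ (-6:ℤ) = 4160/4097 := by nlinarith [sq_nonneg (b ^ (-6:ℤ) - 4160/4097)]
    have hb6 : b ^ (6:ℕ) = a₀ ^ (6:ℕ) := by
      have hb' : b ^ (-6:ℤ) = a₀ ^ (-6:ℤ) := by rw [hbz, hza]
      rw [zpow_neg, zpow_neg, show ((6:ℤ)) = (6:ℕ) by norm_num, zpow_natCast,
        zpow_natCast, inv_inj] at hb'
      exact hb'
    exact (pow_left_strictMonoOn₀ (by norm_num : (6:ℕ) ≠ 0)).injOn hb.le ha0.le hb6
  · by_contra h
    push_neg at h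
    have : a₀ ^ (6:ℕ) ≤ (0.99:ℝ) ^ (6:ℕ) := pow_le_pow_left₀ ha0.le h 6
    rw [hpow] at this
    norm_num [hc] at this
  · have : a₀ < 1 := Real.rpow_lt_one hc0.le (by norm_num) (by norm_num)
    exact this
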